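/- Let V be a finite-dimensional real vector space endowed with alternating bilinear forms ω₁, ω₂ such that c₁ω₁ + c₂ω₂ is nondegenerate for every (c₁,c₂) ∈ ℝ² ∖ {(0,0)}. Then the dimension of V is divisible by 4. -/

import Mathlib

open Module LinearMap Matrix

/-- Orthogonality of distinct generalized eigenspaces of a self-adjoint endomorphism. -/
lemma gen_eig_ortho {K V : Type*} [Field K] [AddCommGroup V] [Module K V]
    (φ : LinearMap.BilinForm K V) (T : Module.End K V)
    (hsa : ∀ x y, φ (T x) y = φ x (T y)) {μ ν : K} (hμν : μ ≠ ν) :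
    ∀ x ∈ T.maxGenEigenspace μ, ∀ y ∈ T.maxGenEigenspace ν, φ x y = 0 := by
  suffices H : ∀ m k l : ℕ, k + l = m → ∀ x y : V,
      ((T - μ • 1) ^ k) x = 0 → ((T - ν • 1) ^ l) y = 0 → φ x y = 0 by
    intro x hx y hy
    rw [Module.End.mem_maxGenEigenspace] at hx hy
    obtain ⟨k, hk⟩ := hx
    obtain ⟨l, hl⟩ := hy
    exact H (k + l) k l rfl x y hk hl
  intro m
  induction m with
  | zero =>
    intro k l hkl x y hx hy
    obtain ⟨rfl, rfl⟩ : k = 0 ∧ l = 0 := by omega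
    simp only [pow_zero, Module.End.one_apply] at hx
    subst hx; simp
  | succ m ih =>
    intro k l hkl x y hx hy
    rcases Nat.eq_zero_or_pos k with rfl | hk
    · simp only [pow_zero, Module.End.one_apply] at hx
      subst hx; simp
    rcases Nat.eq_zero_or_pos l with rfl | hl
    · simp only [pow_zero, Module.End.one_apply] at hy
      subst hy; simp
    -- key identity
    have key : (μ - ν) * φ x y = φ x ((T - ν • 1) y) - φ ((T - μ • 1) x) y := by
      have e1 : φ ((T - μ • 1) x) y = φ (T x) y - μ * φ x y := by
        simp [LinearMap.sub_apply, LinearMap.smul_apply, Module.End.one_apply,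
          map_sub, _root_.map_smul, smul_eq_mul]
      have e2 : φ x ((T - ν • 1) y) = φ x (T y) - ν * φ x y := by
        simp [LinearMap.sub_apply, LinearMap.smul_apply, Module.End.one_apply,
          map_sub, _root_.map_smul, smul_eq_mul]
      rw [e1, e2, hsa]
      ring
    have z1 : φ x ((T - ν • 1) y) = 0 := by
      refine ih k (l - 1) (by omega) x _ hx ?_
      have : ((T - ν • 1) ^ (l - 1)) ((T - ν • 1) y) = ((T - ν • 1) ^ l) y := by
        have hl' : l - 1 + 1 = l := by omega
        rw [← Module.End.mul_apply, ← pow_succ, hl']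
      rw [this, hy]
    have z2 : φ ((T - μ • 1) x) y = 0 := by
      refine ih (k - 1) l (by omega) _ y ?_ hy
      have : ((T - μ • 1) ^ (k - 1)) ((T - μ • 1) x) = ((T - μ • 1) ^ k) x := by
        have hk' : k - 1 + 1 = k := by omega
        rw [← Module.End.mul_apply, ← pow_succ, hk']
      rw [this, hx]
    have : (μ - ν) * φ x y = 0 := by rw [key, z1, z2, sub_zero]
    have hμν' : μ - ν ≠ 0 := sub_ne_zero.mpr hμν
    exact (mul_eq_zero.mp this).resolve_left hμν'

/-- A space with a nondegenerate alternating form has even dimension (char ≠ 2). -/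
lemma even_finrank_of_alt_nondeg {K V : Type*} [Field K] [AddCommGroup V] [Module K V]
    [FiniteDimensional K V] (hK : (2 : K) ≠ 0)
    (φ : LinearMap.BilinForm K V) (halt : φ.IsAlt) (hnd : φ.Nondegenerate) :
    Even (Module.finrank K V) := by
  set b := Module.finBasis K V
  set A := LinearMap.BilinForm.toMatrix b φ with hA
  have hdet : A.det ≠ 0 := (LinearMap.BilinForm.nondegenerate_iff_det_ne_zero b).mp hnd
  have hskew : Aᵀ = -A := by
    ext i j
    simp only [Matrix.transpose_apply, Matrix.neg_apply, hA,
      LinearMap.BilinForm.toMatrix_apply]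
    rw [← halt.neg_eq]
  rw [← Nat.not_odd_iff_even]
  intro hodd
  have : A.det = -A.det := by
    conv_lhs => rw [← Matrix.det_transpose, hskew, Matrix.det_neg]
    rw [Fintype.card_fin, hodd.neg_one_pow]
    ring
  have : (2 : K) * A.det = 0 := by linear_combination this
  exact hdet ((mul_eq_zero.mp this).resolve_left hK)



theorem aux_four_dvd {n : ℕ} (M₁ M₂ : Matrix (Fin n) (Fin n) ℝ)
    (hs₁ : M₁ᵀ = -M₁) (hs₂ : M₂ᵀ = -M₂)
    (hd : ∀ c₁ c₂ : ℝ, (c₁, c₂) ≠ (0, 0) → (c₁ • M₁ + c₂ • M₂).det ≠ 0) :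
    4 ∣ n := by
  classical
  have hd₁ : M₁.det ≠ 0 := by simpa using hd 1 0 (by simp)
  have hd₂ : M₂.det ≠ 0 := by simpa using hd 0 1 (by simp)
  set f : ℝ →+* ℂ := algebraMap ℝ ℂ with hf
  have hfinj : Function.Injective f := (algebraMap ℝ ℂ).injective
  set N₁ : Matrix (Fin n) (Fin n) ℂ := M₁.map f with hN₁
  set N₂ : Matrix (Fin n) (Fin n) ℂ := M₂.map f with hN₂
  set R : Matrix (Fin n) (Fin n) ℝ := M₁⁻¹ * M₂ with hR
  set P : Matrix (Fin n) (Fin n) ℂ := R.map f with hP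
  have hmapdet : ∀ A : Matrix (Fin n) (Fin n) ℝ, (A.map f).det = f A.det := fun A =>
    (RingHom.map_det f A).symm
  have hN₁det : N₁.det ≠ 0 := by
    rw [hN₁, hmapdet]
    intro h
    exact hd₁ (hfinj (by simpa using h))
  have hM₁R : M₁ * R = M₂ := Matrix.mul_nonsing_inv_cancel_left M₁ M₂ (isUnit_iff_ne_zero.mpr hd₁)
  have hinvneg : (-M₁)⁻¹ = -(M₁⁻¹) := by
    apply Matrix.inv_eq_right_inv
    rw [neg_mul_neg, Matrix.mul_nonsing_inv _ (isUnit_iff_ne_zero.mpr hd₁)]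
  have hRT : Rᵀ * M₁ = M₂ := by
    have : Rᵀ = M₂ᵀ * (M₁⁻¹)ᵀ := by rw [hR, Matrix.transpose_mul]
    rw [this, Matrix.transpose_nonsing_inv, hs₁, hs₂, hinvneg, neg_mul_neg,
      Matrix.mul_assoc, Matrix.nonsing_inv_mul _ (isUnit_iff_ne_zero.mpr hd₁), Matrix.mul_one]
  have hPT : Pᵀ * N₁ = N₂ := by
    rw [hP, ← Matrix.transpose_map, hN₁, ← Matrix.map_mul, hRT]
  have hN₁P : N₁ * P = N₂ := by rw [hN₁, hP, ← Matrix.map_mul, hM₁R]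
  set φ : LinearMap.BilinForm ℂ (Fin n → ℂ) := Matrix.toBilin' N₁ with hφ
  set T : Module.End ℂ (Fin n → ℂ) := Matrix.mulVecLin P with hT
  have hφ_apply : ∀ x y, φ x y = x ⬝ᵥ N₁ *ᵥ y := fun x y => Matrix.toBilin'_apply' N₁ x y
  have hT_apply : ∀ x, T x = P *ᵥ x := fun x => rfl
  have hN₁skew : N₁ᵀ = -N₁ := by
    rw [hN₁, ← Matrix.transpose_map, hs₁]
    ext i j
    simp [Matrix.map_apply]
  -- φ is nondegenerate
  have hφnd : φ.Nondegenerate :=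
    LinearMap.BilinForm.nondegenerate_toBilin'_of_det_ne_zero' N₁ hN₁det
  -- φ is alternating
  have hφalt : φ.IsAlt := by
    intro x
    have h1 : φ x x = (N₁ᵀ *ᵥ x) ⬝ᵥ x := by
      rw [hφ_apply, Matrix.dotProduct_mulVec, ← Matrix.mulVec_transpose, dotProduct_comm]
    have h2 : φ x x = -(φ x x) := by
      calc φ x x = (N₁ᵀ *ᵥ x) ⬝ᵥ x := h1
        _ = ((-N₁) *ᵥ x) ⬝ᵥ x := by rw [hN₁skew]
        _ = -((N₁ *ᵥ x) ⬝ᵥ x) := by rw [Matrix.neg_mulVec, neg_dotProduct]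
        _ = -(x ⬝ᵥ N₁ *ᵥ x) := by rw [dotProduct_comm]
        _ = -(φ x x) := by rw [hφ_apply]
    have : (2 : ℂ) * φ x x = 0 := by linear_combination h2
    simpa using (mul_eq_zero.mp this).resolve_left two_ne_zero
  -- T is self-adjoint for φ
  have hsa : ∀ x y, φ (T x) y = φ x (T y) := by
    intro x y
    rw [hφ_apply, hφ_apply, hT_apply, hT_apply]
    rw [Matrix.dotProduct_mulVec, Matrix.vecMul_mulVec, ← Matrix.dotProduct_mulVec,
      Matrix.mulVec_mulVec, hPT, hN₁P]
  -- every generalized eigenspace of `T` is even-dimensional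
  have heven : ∀ μ : ℂ, Even (Module.finrank ℂ (T.maxGenEigenspace μ)) := by
    intro μ
    set U := T.maxGenEigenspace μ with hU
    have hUalt : (φ.restrict U).IsAlt := fun x => hφalt x
    have hndU : (φ.restrict U).Nondegenerate := by
      refine LinearMap.BilinForm.Nondegenerate.ofSeparatingLeft ?_
      intro x hx0
      have hker : ∀ ν : ℂ, T.maxGenEigenspace ν ≤ LinearMap.ker (φ (x : Fin n → ℂ)) := by
        intro ν z hz
        rw [LinearMap.mem_ker]
        by_cases hν : ν = μ
        · subst hν
          simpa [LinearMap.BilinForm.restrict_apply] using hx0 ⟨z, hz⟩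
        · exact gen_eig_ortho φ T hsa (Ne.symm hν) x x.2 z hz
      have hall : ∀ y, φ (x : Fin n → ℂ) y = 0 := by
        intro y
        have hy : y ∈ ⨆ ν : ℂ, T.maxGenEigenspace ν := by
          rw [Module.End.iSup_maxGenEigenspace_eq_top]; trivial
        exact (iSup_le hker : _ ≤ LinearMap.ker (φ (x : Fin n → ℂ))) hy
      exact Subtype.ext (hφnd.1 _ hall)
    exact even_finrank_of_alt_nondeg two_ne_zero (φ.restrict U) hUalt hndU
  -- eigenvalues are non-real
  have hnonreal : ∀ μ : ℂ, T.maxGenEigenspace μ ≠ ⊥ → μ.im ≠ 0 := by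
    intro μ hμ him
    have hmax : T.HasUnifEigenvalue μ ⊤ := hμ
    have heig : T.HasEigenvalue μ :=
      (Module.End.hasUnifEigenvalue_iff_hasUnifEigenvalue_one (by simp)).mp hmax
    obtain ⟨x, hx, hx0⟩ := heig.exists_hasEigenvector
    rw [Module.End.mem_eigenspace_iff] at hx
    set r : ℝ := μ.re with hr
    have hμr : μ = (r : ℂ) := by
      apply Complex.ext <;> simp [hr, him]
    have hQ : ((r • M₁ - M₂).map f) = (r : ℂ) • N₁ - N₂ := by
      ext i j
      simp [Matrix.map_apply, hN₁, hN₂, hf, Matrix.sub_apply, Matrix.smul_apply, smul_eq_mul]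
    have key : ((r • M₁ - M₂).map f) *ᵥ x = 0 := by
      rw [hQ, Matrix.sub_mulVec]
      have e1 : N₁ *ᵥ (T x) = N₂ *ᵥ x := by
        rw [hT_apply, Matrix.mulVec_mulVec, hN₁P]
      have e2 : N₁ *ᵥ (μ • x) = (r : ℂ) • (N₁ *ᵥ x) := by
        rw [hμr, Matrix.mulVec_smul]
      rw [hx] at e1
      rw [e2] at e1
      rw [Matrix.smul_mulVec, e1, sub_self]
    have hdet0 : ((r • M₁ - M₂).map f).det = 0 :=
      Matrix.exists_mulVec_eq_zero_iff.mp ⟨x, hx0, key⟩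
    rw [hmapdet] at hdet0
    have hdetR : (r • M₁ - M₂).det = 0 := hfinj (by simpa using hdet0)
    have : (r • M₁ + (-1 : ℝ) • M₂).det ≠ 0 := hd r (-1) (by simp)
    apply this
    rw [show r • M₁ + (-1 : ℝ) • M₂ = r • M₁ - M₂ by rw [neg_one_smul, ← sub_eq_add_neg], hdetR]
  -- complex conjugation
  set c : ℂ →+* ℂ := starRingEnd ℂ with hc
  set C : (Fin n → ℂ) →ₗ[ℝ] (Fin n → ℂ) :=
    { toFun := fun x i => c (x i)
      map_add' := by intro x y; funext i; simp
      map_smul' := by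
        intro r x; funext i
        simp [hc, Pi.smul_apply, Complex.real_smul, _root_.map_mul, Complex.conj_ofReal] } with hCdef
  have hC_apply : ∀ (x : Fin n → ℂ) (i : Fin n), C x i = c (x i) := fun _ _ => rfl
  have hCC : ∀ x, C (C x) = x := by
    intro x; funext i
    simp [hC_apply, hc]
  have hCinj : Function.Injective C := by
    intro a b hab
    have := congrArg C hab
    rwa [hCC, hCC] at this
  have hCmul : ∀ x, C (P *ᵥ x) = P *ᵥ C x := by
    intro x; funext i
    simp only [hC_apply, Matrix.mulVec, dotProduct, map_sum, _root_.map_mul]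
    refine Finset.sum_congr rfl fun j _ => ?_
    congr 1
    rw [hP]
    simp [Matrix.map_apply, hf, hc, Complex.conj_ofReal]
  have hCsmul : ∀ (a : ℂ) (x : Fin n → ℂ), C (a • x) = c a • C x := by
    intro a x; funext i
    simp [hC_apply, Pi.smul_apply, smul_eq_mul, _root_.map_mul]
  have hCmem : ∀ (μ : ℂ) (x : Fin n → ℂ),
      x ∈ T.maxGenEigenspace μ → C x ∈ T.maxGenEigenspace (c μ) := by
    intro μ x hx
    rw [Module.End.mem_maxGenEigenspace] at hx ⊢
    obtain ⟨k, hk⟩ := hx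
    refine ⟨k, ?_⟩
    have hcomm : ∀ z, (T - c μ • 1) (C z) = C ((T - μ • 1) z) := by
      intro z
      simp only [LinearMap.sub_apply, LinearMap.smul_apply, Module.End.one_apply]
      rw [map_sub, hT_apply, hT_apply, hCmul, hCsmul]
    have hpow : ∀ (k : ℕ) (z : Fin n → ℂ),
        ((T - c μ • 1) ^ k) (C z) = C (((T - μ • 1) ^ k) z) := by
      intro k
      induction k with
      | zero => intro z; simp
      | succ k ih =>
        intro z
        rw [pow_succ', Module.End.mul_apply, ih z, hcomm (((T - μ • 1) ^ k) z),
          ← Module.End.mul_apply, ← pow_succ']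
    rw [hpow k x, hk, map_zero]
  have hmap : ∀ μ : ℂ, Submodule.map C ((T.maxGenEigenspace μ).restrictScalars ℝ)
      = (T.maxGenEigenspace (c μ)).restrictScalars ℝ := by
    intro μ
    apply le_antisymm
    · rintro _ ⟨x, hx, rfl⟩
      exact hCmem μ x hx
    · intro y hy
      refine ⟨C y, ?_, hCC y⟩
      have h' := hCmem (c μ) y hy
      rwa [show c (c μ) = μ from Complex.conj_conj μ] at h'
  have hdim2 : ∀ ν : ℂ, Module.finrank ℝ ((T.maxGenEigenspace ν).restrictScalars ℝ)
      = 2 * Module.finrank ℂ (T.maxGenEigenspace ν) := by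
    intro ν
    rw [LinearEquiv.finrank_eq
        ((Submodule.restrictScalarsEquiv ℝ ℂ (Fin n → ℂ) (T.maxGenEigenspace ν)).restrictScalars ℝ),
      ← Module.finrank_mul_finrank (F := ℝ) (K := ℂ) (A := ↥(T.maxGenEigenspace ν)),
      Complex.finrank_real_complex]
  have hdim : ∀ μ : ℂ, Module.finrank ℂ (T.maxGenEigenspace (c μ))
      = Module.finrank ℂ (T.maxGenEigenspace μ) := by
    intro μ
    have h1 : Module.finrank ℝ ((T.maxGenEigenspace μ).restrictScalars ℝ)
        = Module.finrank ℝ ((T.maxGenEigenspace (c μ)).restrictScalars ℝ) := by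
      rw [← hmap μ]
      exact (Submodule.equivMapOfInjective C hCinj _).finrank_eq
    rw [hdim2, hdim2] at h1
    omega
  have hSconj : ∀ μ : ℂ, T.maxGenEigenspace μ ≠ ⊥ → T.maxGenEigenspace (c μ) ≠ ⊥ := by
    intro μ hμ h0
    apply hμ
    rw [← Submodule.finrank_eq_zero (R := ℂ)]
    rw [← hdim μ, h0]
    simp
  -- decomposition and counting
  have hds : DirectSum.IsInternal T.maxGenEigenspace :=
    DirectSum.isInternal_submodule_of_iSupIndep_of_iSup_eq_top T.independent_maxGenEigenspace
      (Module.End.iSup_maxGenEigenspace_eq_top T)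
  have hfin : {μ : ℂ | T.maxGenEigenspace μ ≠ ⊥}.Finite :=
    WellFoundedGT.finite_ne_bot_of_iSupIndep T.independent_maxGenEigenspace
  let _i1 : Fintype {μ : ℂ // T.maxGenEigenspace μ ≠ ⊥} := hfin.fintype
  let _i2 : Fintype {μ : ℂ | T.maxGenEigenspace μ ≠ ⊥} := hfin.fintype
  have hds' : DirectSum.IsInternal (fun μ : {μ : ℂ // T.maxGenEigenspace μ ≠ ⊥} =>
      T.maxGenEigenspace μ.1) := DirectSum.isInternal_ne_bot_iff.mpr hds
  have e := LinearEquiv.ofBijective (DirectSum.coeLinearMap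
    (fun μ : {μ : ℂ // T.maxGenEigenspace μ ≠ ⊥} => T.maxGenEigenspace μ.1)) hds'
  have hn : n = ∑ μ : {μ : ℂ // T.maxGenEigenspace μ ≠ ⊥},
      Module.finrank ℂ (T.maxGenEigenspace μ.1) := by
    rw [← Module.finrank_directSum, e.finrank_eq, Module.finrank_fin_fun]
  have hn' : n = ∑ μ ∈ hfin.toFinset, Module.finrank ℂ (T.maxGenEigenspace μ) := by
    refine hn.trans ?_
    rw [← Finset.sum_coe_sort hfin.toFinset
      (fun μ => Module.finrank ℂ (T.maxGenEigenspace μ))]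
    exact Fintype.sum_equiv hfin.subtypeEquivToFinset _ _ (fun μ => rfl)
  set d : ℂ → ℕ := fun μ => Module.finrank ℂ (T.maxGenEigenspace μ) with hdd
  set s : Finset ℂ := hfin.toFinset with hs
  have hmem : ∀ μ, μ ∈ s ↔ T.maxGenEigenspace μ ≠ ⊥ := fun μ => hfin.mem_toFinset
  have hsplit : ∑ μ ∈ s, d μ = ∑ μ ∈ s.filter (fun μ => 0 < μ.im), d μ
      + ∑ μ ∈ s.filter (fun μ => μ.im < 0), d μ := by
    rw [← Finset.sum_filter_add_sum_filter_not s (fun μ => 0 < μ.im) d]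
    congr 1
    apply Finset.sum_congr ?_ (fun _ _ => rfl)
    ext μ
    simp only [Finset.mem_filter, not_lt]
    constructor
    · rintro ⟨hμ, him⟩
      exact ⟨hμ, lt_of_le_of_ne him (hnonreal μ ((hmem μ).mp hμ))⟩
    · rintro ⟨hμ, him⟩
      exact ⟨hμ, le_of_lt him⟩
  have hbij : ∑ μ ∈ s.filter (fun μ => μ.im < 0), d μ
      = ∑ μ ∈ s.filter (fun μ => 0 < μ.im), d μ := by
    refine Finset.sum_nbij' (fun μ => c μ) (fun μ => c μ) ?_ ?_ ?_ ?_ ?_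
    · intro μ hμ
      rw [Finset.mem_filter] at hμ ⊢
      refine ⟨(hmem _).mpr (hSconj μ ((hmem μ).mp hμ.1)), ?_⟩
      have : (c μ).im = -μ.im := Complex.conj_im μ
      rw [this]
      linarith [hμ.2]
    · intro μ hμ
      rw [Finset.mem_filter] at hμ ⊢
      refine ⟨(hmem _).mpr (hSconj μ ((hmem μ).mp hμ.1)), ?_⟩
      have : (c μ).im = -μ.im := Complex.conj_im μ
      rw [this]
      linarith [hμ.2]
    · intro μ _; exact Complex.conj_conj μ
    · intro μ _; exact Complex.conj_conj μ
    · intro μ _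
      exact (hdim μ).symm
  have h2 : 2 ∣ ∑ μ ∈ s.filter (fun μ => 0 < μ.im), d μ :=
    Finset.dvd_sum fun μ _ => (heven μ).two_dvd
  obtain ⟨t, ht⟩ := h2
  refine ⟨t, ?_⟩
  have : (n : ℕ) = 2 * (2 * t) := by
    rw [hn']
    rw [show (∑ μ ∈ hfin.toFinset, Module.finrank ℂ (T.maxGenEigenspace μ)) = ∑ μ ∈ s, d μ from rfl]
    rw [hsplit, hbij, ht]
    ring
  omega


/-- A finite-dimensional real vector space carrying a pencil of alternating forms that is
nondegenerate at every nonzero parameter has dimension divisible by `4`. -/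
theorem allowable_pair_dim_div_four {V : Type*} [AddCommGroup V] [Module ℝ V]
    [FiniteDimensional ℝ V]
    (ω₁ ω₂ : LinearMap.BilinForm ℝ V)
    (h₁ : LinearMap.BilinForm.IsAlt ω₁) (h₂ : LinearMap.BilinForm.IsAlt ω₂)
    (hnd : ∀ c₁ c₂ : ℝ, (c₁, c₂) ≠ (0, 0) →
      LinearMap.BilinForm.Nondegenerate (c₁ • ω₁ + c₂ • ω₂)) :
    4 ∣ Module.finrank ℝ V := by
  classical
  set b := Module.finBasis ℝ V with hb
  have hskew : ∀ ω : LinearMap.BilinForm ℝ V, ω.IsAlt →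
      (LinearMap.BilinForm.toMatrix b ω)ᵀ = -(LinearMap.BilinForm.toMatrix b ω) := by
    intro ω h
    ext i j
    simp only [Matrix.transpose_apply, Matrix.neg_apply, LinearMap.BilinForm.toMatrix_apply]
    rw [← h.neg_eq]
  apply aux_four_dvd (LinearMap.BilinForm.toMatrix b ω₁) (LinearMap.BilinForm.toMatrix b ω₂)
    (hskew ω₁ h₁) (hskew ω₂ h₂)
  intro c₁ c₂ hc
  have hnd' := hnd c₁ c₂ hc
  have hlin : LinearMap.BilinForm.toMatrix b (c₁ • ω₁ + c₂ • ω₂)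
      = c₁ • LinearMap.BilinForm.toMatrix b ω₁ + c₂ • LinearMap.BilinForm.toMatrix b ω₂ := by
    simp [map_add, _root_.map_smul]
  rw [← hlin]
  exact (LinearMap.BilinForm.nondegenerate_iff_det_ne_zero b).mp hnd'
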